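/- Let A be a nonempty convex set in ℝ^k and g : A → ℝ a concave function. Define W(x) = sup{g(a) + a·x : a ∈ A} for x ∈ ℝ^k and G(a) = inf{W(x) - a·x : x ∈ ℝ^k} for a ∈ ℝ^k. Then G(a) = g(a) for every a in the relative interior of A. Moreover, if A is closed and g is upper semi-continuous at a point a ∈ A, then G(a) = g(a). -/

import Mathlib

open Filter Topology Set

noncomputable section

variable {k : ℕ}

/-- `W(x) = sup {g(a) + ⟪a, x⟫ : a ∈ A}`, valued in `EReal` (it may be `+∞`). -/
def Wfun (A : Set (EuclideanSpace ℝ (Fin k))) (g : EuclideanSpace ℝ (Fin k) → ℝ)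
    (x : EuclideanSpace ℝ (Fin k)) : EReal :=
  ⨆ a ∈ A, (((g a + (inner ℝ a x : ℝ)) : ℝ) : EReal)

/-- `G(a) = inf {W(x) - ⟪a, x⟫ : x ∈ ℝ^k}`. -/
def Gfun (A : Set (EuclideanSpace ℝ (Fin k))) (g : EuclideanSpace ℝ (Fin k) → ℝ)
    (a : EuclideanSpace ℝ (Fin k)) : EReal :=
  ⨅ x : EuclideanSpace ℝ (Fin k), Wfun A g x - (((inner ℝ a x : ℝ)) : EReal)

local notation "E" => EuclideanSpace ℝ (Fin k)

theorem lemA (A : Set (EuclideanSpace ℝ (Fin k))) (g : EuclideanSpace ℝ (Fin k) → ℝ)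
    {a : EuclideanSpace ℝ (Fin k)} (ha : a ∈ A) : ((g a : ℝ) : EReal) ≤ Gfun A g a := by
  refine le_iInf fun x => ?_
  rw [EReal.le_sub_iff_add_le (Or.inl (EReal.coe_ne_bot _)) (Or.inl (EReal.coe_ne_top _))]
  rw [← EReal.coe_add]
  exact le_biSup (f := fun a => (((g a + (inner ℝ a x : ℝ)) : ℝ) : EReal)) ha

theorem lemB (A : Set E) (g : E → ℝ) (hg : ConcaveOn ℝ A g)
    {a : E} (ha : a ∈ A) (husc : UpperSemicontinuousWithinAt g A a) :
    Gfun A g a ≤ ((g a : ℝ) : EReal) := by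
  -- reduce to ε-approximation
  by_contra hcon
  push_neg at hcon
  obtain ⟨c, hc1, hc2⟩ := EReal.exists_between_coe_real hcon
  have hc1' : g a < c := by exact_mod_cast hc1
  set ε : ℝ := c - g a with hε
  have hεpos : 0 < ε := by linarith
  -- the hypograph
  set H : Set (E × ℝ) := {p : E × ℝ | p.1 ∈ A ∧ p.2 ≤ g p.1} with hH
  have hHconv : Convex ℝ H := hg.convex_hypograph
  -- the point (a, g a + ε) is not in the closure of H
  have hpnot : (a, g a + ε) ∉ closure H := by
    intro hp
    obtain ⟨u, huH, hulim⟩ := mem_closure_iff_seq_limit.1 hp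
    have h1 : Tendsto (fun n => (u n).1) atTop (𝓝 a) :=
      (continuous_fst.tendsto _).comp hulim
    have h2 : Tendsto (fun n => (u n).2) atTop (𝓝 (g a + ε)) :=
      (continuous_snd.tendsto _).comp hulim
    have h1' : Tendsto (fun n => (u n).1) atTop (𝓝[A] a) := by
      rw [tendsto_nhdsWithin_iff]
      exact ⟨h1, Eventually.of_forall fun n => (huH n).1⟩
    have hev : ∀ᶠ n in atTop, g ((u n).1) < g a + ε / 2 :=
      h1'.eventually (husc (g a + ε / 2) (by linarith))
    have hev2 : ∀ᶠ n in atTop, (u n).2 ≤ g a + ε / 2 :=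
      hev.mono fun n hn => le_of_lt (lt_of_le_of_lt (huH n).2 hn)
    have := le_of_tendsto h2 hev2
    linarith
  -- separate
  obtain ⟨f, u, hfH, hfp⟩ :=
    geometric_hahn_banach_closed_point hHconv.closure isClosed_closure hpnot
  set s : ℝ := f (0, 1) with hs
  have hsplit : ∀ b : E, ∀ t : ℝ, f (b, t) = f (b, 0) + t * s := by
    intro b t
    have : (b, t) = (b, (0:ℝ)) + t • ((0:E), (1:ℝ)) := by
      simp [Prod.ext_iff]
    rw [this, map_add, map_smul]
    simp [hs, smul_eq_mul]
  have hfH' : ∀ b ∈ A, ∀ t : ℝ, t ≤ g b → f (b, 0) + t * s < u := by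
    intro b hb t ht
    have := hfH (b, t) (subset_closure ⟨hb, ht⟩)
    rwa [hsplit] at this
  have hfp' : u < f (a, 0) + (g a + ε) * s := by
    have := hfp
    rwa [hsplit] at this
  -- s ≥ 0
  have hs0 : 0 ≤ s := by
    by_contra hneg
    push_neg at hneg
    obtain ⟨n, hn⟩ := exists_nat_gt ((u - f (a, 0) - g a * s) / (-s))
    have h1 : f (a, 0) + (g a - n) * s < u := hfH' a ha _ (by linarith [Nat.cast_nonneg (α := ℝ) n])
    have h2 : (u - f (a, 0) - g a * s) < n * (-s) := by
      rw [div_lt_iff₀ (by linarith)] at hn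
      linarith [hn]
    nlinarith
  have hsne : s ≠ 0 := by
    intro h0
    have h1 : f (a, 0) + g a * s < u := hfH' a ha _ le_rfl
    rw [h0] at h1 hfp'
    simp at h1 hfp'
    linarith
  have hspos : 0 < s := lt_of_le_of_ne hs0 (Ne.symm hsne)
  -- build x
  set y : E := (InnerProductSpace.toDual ℝ E).symm (f.comp (ContinuousLinearMap.inl ℝ E ℝ)) with hy
  have hyb : ∀ b : E, (inner ℝ y b : ℝ) = f (b, 0) := by
    intro b
    rw [hy, InnerProductSpace.toDual_symm_apply]
    rfl
  set x : E := s⁻¹ • y with hx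
  have hxb : ∀ b : E, (inner ℝ b x : ℝ) = f (b, 0) / s := by
    intro b
    rw [real_inner_comm, hx, real_inner_smul_left, hyb, div_eq_inv_mul]
  -- W x ≤ u / s
  have hW : Wfun A g x ≤ ((u / s : ℝ) : EReal) := by
    refine iSup₂_le fun b hb => ?_
    rw [EReal.coe_le_coe_iff]
    have h1 := hfH' b hb (g b) le_rfl
    rw [hxb]
    rw [le_div_iff₀ hspos, add_mul, div_mul_cancel₀ _ hsne]
    linarith
  -- conclude
  have hG : Gfun A g a ≤ Wfun A g x - ((inner ℝ a x : ℝ) : EReal) := iInf_le _ x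
  have h2 : Wfun A g x - ((inner ℝ a x : ℝ) : EReal) ≤ ((u / s - inner ℝ a x : ℝ) : EReal) := by
    rw [EReal.coe_sub]
    exact EReal.sub_le_sub hW le_rfl
  have h3 : u / s - (inner ℝ a x : ℝ) ≤ g a + ε := by
    rw [hxb]
    rw [sub_le_iff_le_add, div_le_iff₀ hspos, add_mul, div_mul_cancel₀ _ hsne]
    linarith
  have : Gfun A g a ≤ ((g a + ε : ℝ) : EReal) :=
    le_trans hG (le_trans h2 (by exact_mod_cast h3))
  rw [hε] at this
  have : Gfun A g a ≤ (c : EReal) := by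
    convert this using 2
    ring
  exact absurd (lt_of_le_of_lt this hc2) (lt_irrefl _)

theorem jensenLem (A : Set E) (g : E → ℝ) (hg : ConcaveOn ℝ A g) {a : E} (haA : a ∈ A)
    (d : ℕ) (b : Module.Basis (Fin d) ℝ ((affineSpan ℝ A).direction)) (r₁ : ℝ) (hr₁ : 0 < r₁)
    (hvert : ∀ (i : Fin d) (s : ℝ), s = r₁ ∨ s = -r₁ → a + s • (b i : E) ∈ A)
    (m : ℝ) (hma : m ≤ g a)
    (hmv : ∀ (i : Fin d) (s : ℝ), s = r₁ ∨ s = -r₁ → m ≤ g (a + s • (b i : E)))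
    (v : (affineSpan ℝ A).direction) (hv : ∑ i, |b.repr v i| ≤ r₁) :
    m ≤ g (a + (v : E)) := by
  classical
  set c : Fin d → ℝ := fun i => b.repr v i with hcdef
  set w : Option (Fin d) → ℝ := fun j => Option.elim j (1 - ∑ i, |c i| / r₁) (fun i => |c i| / r₁) with hw
  set p : Option (Fin d) → E := fun j =>
    Option.elim j a (fun i => a + (if 0 ≤ c i then r₁ else -r₁) • (b i : E)) with hp
  have hw0 : ∀ j ∈ Finset.univ, 0 ≤ w (j : Option (Fin d)) := by
    rintro (_ | i) _
    · simp only [hw, Option.elim]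
      rw [sub_nonneg, ← Finset.sum_div]
      exact div_le_one_of_le₀ hv hr₁.le
    · exact div_nonneg (abs_nonneg _) hr₁.le
  have hw1 : ∑ j : Option (Fin d), w j = 1 := by
    rw [Fintype.sum_option]
    simp [hw]
  have hmem : ∀ j ∈ Finset.univ, p (j : Option (Fin d)) ∈ A := by
    rintro (_ | i) _
    · exact haA
    · refine hvert i _ ?_
      split_ifs <;> simp
  have hkey : ∀ i : Fin d, |c i| / r₁ * (if 0 ≤ c i then r₁ else -r₁) = c i := by
    intro i
    split_ifs with h
    · rw [abs_of_nonneg h]; field_simp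
    · rw [abs_of_neg (not_le.1 h)]; field_simp
  have hvsum : (v : E) = ∑ i : Fin d, c i • (b i : E) := by
    conv_lhs => rw [← b.sum_repr v]
    push_cast
    rfl
  have hsum : ∑ j : Option (Fin d), w j • p j = a + (v : E) := by
    rw [Fintype.sum_option]
    have : ∀ i : Fin d, w (some i) • p (some i) = (|c i| / r₁) • a + c i • (b i : E) := by
      intro i
      simp only [hw, hp, Option.elim, smul_add, smul_smul, hkey]
    rw [Finset.sum_congr rfl fun i _ => this i, Finset.sum_add_distrib, ← Finset.sum_smul]
    simp only [hw, hp, Option.elim]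
    rw [hvsum, ← add_assoc, ← add_smul]
    simp
  have hJ := hg.le_map_sum hw0 hw1 hmem
  rw [hsum] at hJ
  refine le_trans ?_ hJ
  calc m = ∑ j : Option (Fin d), w j * m := by rw [← Finset.sum_mul, hw1, one_mul]
  _ ≤ ∑ j : Option (Fin d), w j • g (p j) := by
      refine Finset.sum_le_sum fun j hj => ?_
      rw [smul_eq_mul]
      refine mul_le_mul_of_nonneg_left ?_ (hw0 j hj)
      match j with
      | none => exact hma
      | some i => refine hmv i _ (by split_ifs <;> simp)

set_option maxHeartbeats 1000000 in
theorem lemC (A : Set E) (g : E → ℝ) (hg : ConcaveOn ℝ A g)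
    {a : E} (ha : a ∈ intrinsicInterior ℝ A) : UpperSemicontinuousWithinAt g A a := by
  classical
  have haA : a ∈ A := intrinsicInterior_subset ha
  -- relative ball inside A
  obtain ⟨z, hz, hza⟩ := ha
  obtain ⟨r₀, hr₀pos, hball₀⟩ := Metric.mem_nhds_iff.1 (mem_interior_iff_mem_nhds.1 hz)
  have hball : ∀ y : E, y ∈ affineSpan ℝ A → dist y a < r₀ → y ∈ A := by
    intro y hy hdist
    have : (⟨y, hy⟩ : affineSpan ℝ A) ∈ Metric.ball z r₀ := by
      rw [Metric.mem_ball, Subtype.dist_eq]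
      simpa [hza] using hdist
    exact hball₀ this
  have haspan : a ∈ affineSpan ℝ A := subset_affineSpan ℝ A haA
  set V := (affineSpan ℝ A).direction with hV
  have hmemspan : ∀ v : E, v ∈ V → a + v ∈ affineSpan ℝ A := by
    intro v hv
    simpa [add_comm] using AffineSubspace.vadd_mem_of_mem_direction hv haspan
  have hdista : ∀ v : E, dist (a + v) a = ‖v‖ := by
    intro v
    rw [dist_eq_norm]
    simp
  set d := Module.finrank ℝ V with hd
  set b : Module.Basis (Fin d) ℝ V := Module.finBasis ℝ V with hb
  -- coordinate bound
  set C : ℝ := ∑ i : Fin d, ‖LinearMap.toContinuousLinearMap (b.coord i)‖ with hC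
  have hCnn : 0 ≤ C := Finset.sum_nonneg fun i _ => ContinuousLinearMap.opNorm_nonneg _
  have hcoord : ∀ v : V, ∑ i, |b.repr v i| ≤ C * ‖v‖ := by
    intro v
    rw [hC, Finset.sum_mul]
    refine Finset.sum_le_sum fun i _ => ?_
    have := (LinearMap.toContinuousLinearMap (b.coord i)).le_opNorm v
    simpa [Module.Basis.coord_apply] using this
  -- choose r₁
  set N : ℝ := 1 + ∑ i : Fin d, ‖(b i : E)‖ with hN
  have hNpos : 0 < N := by
    have : (0:ℝ) ≤ ∑ i : Fin d, ‖(b i : E)‖ := Finset.sum_nonneg fun i _ => norm_nonneg _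
    rw [hN]; linarith
  have hNi : ∀ i : Fin d, ‖(b i : E)‖ ≤ N := by
    intro i
    have h1 : ‖(b i : E)‖ ≤ ∑ j : Fin d, ‖(b j : E)‖ :=
      Finset.single_le_sum (fun j _ => norm_nonneg ((b j : E))) (Finset.mem_univ i)
    rw [hN]; linarith
  set r₁ : ℝ := r₀ / (2 * N) with hr₁def
  have hr₁pos : 0 < r₁ := div_pos hr₀pos (by linarith)
  have hvert : ∀ (i : Fin d) (s : ℝ), s = r₁ ∨ s = -r₁ → a + s • (b i : E) ∈ A := by
    intro i s hs
    refine hball _ (hmemspan _ (Submodule.smul_mem V s (SetLike.coe_mem (b i)))) ?_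
    rw [hdista, norm_smul]
    have habs : |s| = r₁ := by rcases hs with h | h <;> simp [h, abs_of_pos hr₁pos, hr₁pos.le]
    rw [Real.norm_eq_abs, habs]
    calc r₁ * ‖(b i : E)‖ ≤ r₁ * N := mul_le_mul_of_nonneg_left (hNi i) hr₁pos.le
    _ = r₀ / 2 := by rw [hr₁def]; field_simp
    _ < r₀ := by linarith
  -- the lower bound m
  set m : ℝ := min (g a) (⨅ j : Fin d × Bool, g (a + (if j.2 then r₁ else -r₁) • (b j.1 : E))) with hm
  have hma : m ≤ g a := min_le_left _ _
  have hmv : ∀ (i : Fin d) (s : ℝ), s = r₁ ∨ s = -r₁ → m ≤ g (a + s • (b i : E)) := by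
    intro i s hs
    have hbdd : BddBelow (Set.range fun j : Fin d × Bool =>
        g (a + (if j.2 then r₁ else -r₁) • (b j.1 : E))) :=
      (Set.finite_range _).bddBelow
    rcases hs with h | h
    · refine le_trans (min_le_right _ _) ?_
      simpa [h] using ciInf_le hbdd (i, true)
    · refine le_trans (min_le_right _ _) ?_
      simpa [h] using ciInf_le hbdd (i, false)
  -- radius r
  set r : ℝ := min (r₀ / 2) (r₁ / (1 + C)) with hr
  have hrpos : 0 < r := lt_min (by linarith) (div_pos hr₁pos (by linarith))
  have hrC : C * r ≤ r₁ := by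
    have h1 : r ≤ r₁ / (1 + C) := min_le_right _ _
    have h2 : C * r ≤ C * (r₁ / (1 + C)) := mul_le_mul_of_nonneg_left h1 hCnn
    have h3 : C * (r₁ / (1 + C)) ≤ r₁ := by
      rw [mul_div_assoc']
      rw [div_le_iff₀ (by linarith)]
      nlinarith
    linarith
  have hrr₀ : r < r₀ := lt_of_le_of_lt (min_le_left _ _) (by linarith)
  -- the main USC estimate
  intro y0 hy0
  set ε : ℝ := y0 - g a with hε
  have hεpos : 0 < ε := by simp only [hε]; linarith [hy0]
  have hgam : 0 ≤ g a - m := by linarith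
  set δ : ℝ := min r (r * ε / (g a - m + 1)) with hδ
  have hδpos : 0 < δ := lt_min hrpos (div_pos (mul_pos hrpos hεpos) (by linarith))
  filter_upwards [self_mem_nhdsWithin,
    mem_nhdsWithin_of_mem_nhds (Metric.ball_mem_nhds a hδpos)] with x hxA hxball
  rcases eq_or_ne x a with rfl | hne
  · linarith [hy0]
  set t : ℝ := dist a x with ht
  have htpos : 0 < t := by
    rw [ht, dist_comm]
    exact dist_pos.2 hne
  have htδ : t < δ := by
    rw [ht, dist_comm]
    exact hxball
  -- the reflected point
  have haxV : a - x ∈ V := by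
    have := AffineSubspace.vsub_mem_direction haspan (subset_affineSpan ℝ A hxA)
    simpa using this
  set wv : E := (r / t) • (a - x) with hwv
  have hwvV : wv ∈ V := Submodule.smul_mem V _ haxV
  have hwvnorm : ‖wv‖ = r := by
    rw [hwv, norm_smul, ← dist_eq_norm, ← ht, Real.norm_eq_abs, abs_of_pos (div_pos hrpos htpos)]
    field_simp
  set cpt : E := a + wv with hcpt
  have hcptA : cpt ∈ A := hball _ (hmemspan _ hwvV) (by rw [hcpt, hdista, hwvnorm]; exact hrr₀)
  have hgc : m ≤ g cpt := by
    have := jensenLem A g hg haA d b r₁ hr₁pos hvert m hma hmv ⟨wv, hwvV⟩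
      (by
        refine le_trans (hcoord ⟨wv, hwvV⟩) ?_
        have hnv : ‖(⟨wv, hwvV⟩ : V)‖ = r := by
          rw [show ‖(⟨wv, hwvV⟩ : V)‖ = ‖wv‖ from rfl]
          exact hwvnorm
        rw [hnv]; exact hrC)
    exact this
  -- concavity
  have hrt : 0 < r + t := by linarith
  have hcomb : (r / (r + t)) • x + (t / (r + t)) • cpt = a := by
    rw [hcpt, hwv]
    match_scalars <;> field_simp <;> ring
  have hconc := hg.2 hxA hcptA (le_of_lt (div_pos hrpos hrt)) (le_of_lt (div_pos htpos hrt))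
    (by field_simp)
  rw [hcomb] at hconc
  simp only [smul_eq_mul] at hconc
  have h5 : r * g x + t * g cpt ≤ (r + t) * g a := by
    rw [div_mul_eq_mul_div, div_mul_eq_mul_div, ← add_div, div_le_iff₀ hrt] at hconc
    nlinarith
  have htm : t * (g a - m) < r * ε := by
    have h1 : δ ≤ r * ε / (g a - m + 1) := min_le_right _ _
    have h2 : t * (g a - m + 1) < r * ε := by
      have := lt_of_lt_of_le htδ h1
      rw [lt_div_iff₀ (by linarith)] at this
      nlinarith
    nlinarith
  have : r * g x < r * y0 := by nlinarith
  exact lt_of_mul_lt_mul_left this hrpos.le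

/-- Corollary 2.5: biconjugation recovers a concave `g : A → ℝ` on the
relative (intrinsic) interior of `A`, and—when `A` is closed—at every point of `A`
where `g` is upper semi-continuous. -/
theorem stmt3 (A : Set (EuclideanSpace ℝ (Fin k))) (hAne : A.Nonempty)
    (hAconv : Convex ℝ A) (g : EuclideanSpace ℝ (Fin k) → ℝ) (hg : ConcaveOn ℝ A g) :
    (∀ a ∈ intrinsicInterior ℝ A, Gfun A g a = ((g a : ℝ) : EReal)) ∧
    (IsClosed A → ∀ a ∈ A, UpperSemicontinuousWithinAt g A a →
      Gfun A g a = ((g a : ℝ) : EReal)) := by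
  constructor
  · intro a ha
    exact le_antisymm (lemB A g hg (intrinsicInterior_subset ha) (lemC A g hg ha))
      (lemA A g (intrinsicInterior_subset ha))
  · intro _ a haA husc
    exact le_antisymm (lemB A g hg haA husc) (lemA A g haA)
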